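/- Assuming Martin's Axiom for σ-centered posets at κ (equivalently κ < 𝔭), if G is a Gδ semifilter on ω and {A_α : α < κ} is a family of sets centered in G, then there is a single A ∈ G with A ⊆* A_α for all α < κ. Consequently 𝔭 ≤ 𝔭_G for every Gδ semifilter G. -/

import Mathlib

open Cardinal

/-- `A ⊆* B` for subsets of ω. -/
def AlmostSub (A B : Set ℕ) : Prop := (A \ B).Finite

def CenteredIn (S F : Set (Set ℕ)) : Prop :=
  F ⊆ S ∧ ∀ T : Finset (Set ℕ), T.Nonempty → ↑T ⊆ F → ⋂₀ (T : Set (Set ℕ)) ∈ S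

def HasLowerBoundIn (S F : Set (Set ℕ)) : Prop :=
  ∃ A ∈ S, ∀ B ∈ F, AlmostSub A B

/-- The pseudointersection number `𝔭`: the least cardinality of a centered subset of
`[ω]^ω` with no infinite pseudointersection. -/
noncomputable def pNumber : Cardinal :=
  sInf {c | ∃ F : Set (Set ℕ), CenteredIn {A : Set ℕ | A.Infinite} F ∧
    ¬ HasLowerBoundIn {A : Set ℕ | A.Infinite} F ∧ c = #F}

/-- `⊆*` on Cantor space. -/
def AlmostSubC (X Y : ℕ → Bool) : Prop :=
  ({n | X n = true} \ {n | Y n = true}).Finite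

def IsSemifilterC (S : Set (ℕ → Bool)) : Prop :=
  S.Nonempty ∧ S ≠ Set.univ ∧ ∀ X Y : ℕ → Bool, X ∈ S → AlmostSubC X Y → Y ∈ S

def CenteredInC (G F : Set (ℕ → Bool)) : Prop :=
  F ⊆ G ∧ ∀ T : Finset (ℕ → Bool), T.Nonempty → ↑T ⊆ F →
    (fun n => decide (∀ X ∈ T, X n = true)) ∈ G

def HasLowerBoundInC (G F : Set (ℕ → Bool)) : Prop :=
  ∃ A ∈ G, ∀ B ∈ F, AlmostSubC A B

/-- `𝔭_G` for a semifilter `G ⊆ 2^ω`. -/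
noncomputable def pInvC (G : Set (ℕ → Bool)) : Cardinal :=
  sInf {c | ∃ F : Set (ℕ → Bool), CenteredInC G F ∧ ¬ HasLowerBoundInC G F ∧ c = #F}

lemma key_finite_witness (U : Set (ℕ → Bool)) (hU : IsOpen U) (X : ℕ → Bool)
    (hX : ∀ Y : ℕ → Bool, (∀ n, X n = true → Y n = true) → Y ∈ U) :
    ∃ F : Finset ℕ, (∀ n ∈ F, X n = true) ∧ ∀ Y : ℕ → Bool, (∀ n ∈ F, Y n = true) → Y ∈ U := by
  by_contra h
  push_neg at h
  set C : ℕ → Set (ℕ → Bool) :=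
    fun k => {Y | (∀ n < k, X n = true → Y n = true) ∧ Y ∉ U} with hC
  have hdec : ∀ k, C (k+1) ⊆ C k := by
    intro k Y hY
    exact ⟨fun n hn hXn => hY.1 n (Nat.lt_succ_of_lt hn) hXn, hY.2⟩
  have hne : ∀ k, (C k).Nonempty := by
    intro k
    obtain ⟨Y, hY1, hY2⟩ := h ((Finset.range k).filter (fun n => X n = true))
      (by intro n hn; exact (Finset.mem_filter.mp hn).2)
    refine ⟨Y, fun n hn hXn => hY1 n ?_, hY2⟩
    exact Finset.mem_filter.mpr ⟨Finset.mem_range.mpr hn, hXn⟩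
  have hclosed : ∀ k, IsClosed (C k) := by
    intro k
    have : C k = (⋂ n ∈ Finset.range k, {Y : ℕ → Bool | X n = true → Y n = true}) ∩ Uᶜ := by
      ext Y; simp [hC]
    rw [this]
    refine IsClosed.inter ?_ (isClosed_compl_iff.mpr hU)
    refine isClosed_biInter (fun n _ => ?_)
    by_cases hXn : X n = true
    · have : {Y : ℕ → Bool | X n = true → Y n = true} = (fun Y : ℕ → Bool => Y n) ⁻¹' {true} := by
        ext Y; simp [hXn]
      rw [this]; exact IsClosed.preimage (continuous_apply n) isClosed_singleton
    · have : {Y : ℕ → Bool | X n = true → Y n = true} = Set.univ := by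
        ext Y; simp [hXn]
      rw [this]; exact isClosed_univ
  obtain ⟨Y, hY⟩ := IsCompact.nonempty_iInter_of_sequence_nonempty_isCompact_isClosed
    C hdec hne ((hclosed 0).isCompact) hclosed
  simp only [Set.mem_iInter] at hY
  have hYU : Y ∈ U := hX Y (fun n hXn => (hY (n+1)).1 n (Nat.lt_succ_self n) hXn)
  exact (hY 0).2 hYU

lemma superset_mem (G : Set (ℕ → Bool)) (hG : IsSemifilterC G) {X Y : ℕ → Bool}
    (hX : X ∈ G) (h : ∀ n, X n = true → Y n = true) : Y ∈ G := by
  refine hG.2.2 X Y hX ?_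
  refine Set.Finite.subset Set.finite_empty ?_
  intro n hn
  exact absurd (h n hn.1) hn.2

lemma main_infinite (G : Set (ℕ → Bool)) (hG : IsSemifilterC G) (hGδ : IsGδ G)
    (ι : Type) [Infinite ι] (A : ι → ℕ → Bool) (hcard : #ι < pNumber)
    (hcent : ∀ T : Finset ι, T.Nonempty → (fun n => decide (∀ i ∈ T, A i n = true)) ∈ G) :
    ∃ B ∈ G, ∀ i : ι, AlmostSubC B (A i) := by
  classical
  obtain ⟨T, hTopen, hTcount, hTeq⟩ := hGδ
  have hTne : T.Nonempty := by
    rcases Set.eq_empty_or_nonempty T with h | h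
    · exfalso; apply hG.2.1; rw [hTeq, h, Set.sInter_empty]
    · exact h
  obtain ⟨f, hf⟩ := hTcount.exists_eq_range hTne
  -- decreasing sequence of open sets
  set V : ℕ → Set (ℕ → Bool) := fun m => ⋂ j ∈ Finset.range (m+1), f j with hV
  have hVopen : ∀ m, IsOpen (V m) := by
    intro m
    refine isOpen_biInter_finset (fun j _ => ?_)
    exact hTopen (f j) (by rw [hf]; exact ⟨j, rfl⟩)
  have hGV : ∀ m, G ⊆ V m := by
    intro m X hX
    refine Set.mem_iInter₂.mpr (fun j _ => ?_)
    have : X ∈ ⋂₀ T := by rwa [← hTeq]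
    exact this (f j) (by rw [hf]; exact ⟨j, rfl⟩)
  have hVG : (⋂ m, V m) ⊆ G := by
    intro X hX
    rw [hTeq, hf]
    rintro t ⟨j, rfl⟩
    have := Set.mem_iInter.mp hX j
    exact Set.mem_iInter₂.mp this j (Finset.mem_range.mpr (Nat.lt_succ_self j))
  have hVanti : ∀ {j m : ℕ}, j ≤ m → V m ⊆ V j := by
    intro j m hjm X hX
    refine Set.mem_iInter₂.mpr (fun l hl => ?_)
    exact Set.mem_iInter₂.mp hX l (Finset.mem_range.mpr
      (lt_of_lt_of_le (Finset.mem_range.mp hl) (Nat.succ_le_succ hjm)))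
  -- encoding
  set e : ℕ ≃ ℕ × Finset ℕ := (Denumerable.eqv (ℕ × Finset ℕ)).symm with he
  set Good : ℕ × Finset ℕ → Prop :=
    fun p => ∀ Y : ℕ → Bool, (∀ n ∈ p.2, Y n = true) → Y ∈ V p.1 with hGood
  set Xs : ι → Set ℕ := fun i => {a | Good (e a) ∧ ∀ n ∈ (e a).2, A i n = true} with hXs
  set Ys : ℕ → Set ℕ := fun k => {a | Good (e a) ∧ k ≤ (e a).1} with hYs
  set F' : Set (Set ℕ) := Set.range Xs ∪ Set.range Ys with hF'
  have i₀ : ι := Classical.arbitrary ι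
  set Z : Finset ι → ℕ → Set ℕ := fun E k =>
    {a | Good (e a) ∧ k ≤ (e a).1 ∧ ∀ i ∈ E, ∀ n ∈ (e a).2, A i n = true} with hZ
  have hZinf : ∀ E k, (Z E k).Infinite := by
    intro E k
    have hCG : (fun n => decide (∀ i ∈ insert i₀ E, A i n = true)) ∈ G :=
      hcent _ (Finset.insert_nonempty _ _)
    have hstep : ∀ m : ℕ, ∃ F : Finset ℕ,
        (∀ n ∈ F, (∀ i ∈ insert i₀ E, A i n = true)) ∧
        (∀ Y : ℕ → Bool, (∀ n ∈ F, Y n = true) → Y ∈ V (k + m)) := by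
      intro m
      obtain ⟨F, hF1, hF2⟩ := key_finite_witness (V (k+m)) (hVopen (k+m))
        (fun n => decide (∀ i ∈ insert i₀ E, A i n = true))
        (fun Y hY => hGV (k+m) (superset_mem G hG hCG hY))
      exact ⟨F, fun n hn => decide_eq_true_iff.mp (hF1 n hn), hF2⟩
    choose F hF1 hF2 using hstep
    have hinj : Function.Injective (fun m => e.symm (k + m, F m)) := by
      intro m m' hmm'
      have := e.symm.injective hmm'
      have : k + m = k + m' := congrArg Prod.fst this
      omega
    refine Set.infinite_of_injective_forall_mem hinj (fun m => ?_)
    refine ⟨?_, ?_, ?_⟩ <;> rw [Equiv.apply_symm_apply]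
    · exact fun Y hY => hF2 m Y hY
    · exact Nat.le_add_right k m
    · exact fun i hi n hn => hF1 m n hn i (Finset.mem_insert_of_mem hi)
  -- every finite subfamily of F' contains some Z E k
  have hZsub : ∀ T : Finset (Set ℕ), ↑T ⊆ F' → ∃ E k, Z E k ⊆ ⋂₀ (T : Set (Set ℕ)) := by
    intro T
    induction T using Finset.induction with
    | empty => intro _; exact ⟨∅, 0, by simp⟩
    | insert t T' hnotmem ih =>
      intro hins
      have ht : t ∈ F' := hins (Finset.mem_coe.mpr (Finset.mem_insert_self t T'))
      obtain ⟨E, k, hEk⟩ := ih (fun x hx => hins (Finset.mem_coe.mpr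
        (Finset.mem_insert_of_mem (Finset.mem_coe.mp hx))))
      rcases ht with ⟨i, rfl⟩ | ⟨k', rfl⟩
      · refine ⟨insert i E, k, ?_⟩
        intro a ha
        rw [Finset.coe_insert, Set.sInter_insert]
        refine ⟨⟨ha.1, fun n hn => ha.2.2 i (Finset.mem_insert_self i E) n hn⟩, ?_⟩
        refine hEk ⟨ha.1, ha.2.1, fun j hj n hn => ha.2.2 j (Finset.mem_insert_of_mem hj) n hn⟩
      · refine ⟨E, max k k', ?_⟩
        intro a ha
        rw [Finset.coe_insert, Set.sInter_insert]
        refine ⟨⟨ha.1, le_trans (le_max_right k k') ha.2.1⟩, ?_⟩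
        exact hEk ⟨ha.1, le_trans (le_max_left k k') ha.2.1, ha.2.2⟩
  -- F' is centered in the infinite sets
  have hcentered : CenteredIn {A : Set ℕ | A.Infinite} F' := by
    constructor
    · rintro t (⟨i, rfl⟩ | ⟨k, rfl⟩)
      · show (Xs i).Infinite
        refine (hZinf {i} 0).mono (fun a ha => ?_)
        exact ⟨ha.1, fun n hn => ha.2.2 i (Finset.mem_singleton_self i) n hn⟩
      · show (Ys k).Infinite
        refine (hZinf ∅ k).mono (fun a ha => ?_)
        exact ⟨ha.1, ha.2.1⟩
    · intro T hTne' hTsub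
      obtain ⟨E, k, hEk⟩ := hZsub T hTsub
      show (⋂₀ (T : Set (Set ℕ))).Infinite
      exact (hZinf E k).mono hEk
  -- cardinality bound
  have hsize : #F' < pNumber := by
    have h1 : #F' ≤ #(Set.range Xs) + #(Set.range Ys) := Cardinal.mk_union_le _ _
    have h2 : #(Set.range Xs) ≤ #ι := Cardinal.mk_range_le
    have h3 : #(Set.range Ys) ≤ ℵ₀ := le_trans Cardinal.mk_range_le (by simp)
    have hℵ : ℵ₀ ≤ #ι := Cardinal.infinite_iff.mp ‹Infinite ι›
    have : #F' ≤ #ι := by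
      calc #F' ≤ #ι + ℵ₀ := le_trans h1 (add_le_add h2 h3)
        _ = #ι := Cardinal.add_eq_left hℵ hℵ
    exact lt_of_le_of_lt this hcard
  -- pseudointersection
  have hLB : HasLowerBoundIn {A : Set ℕ | A.Infinite} F' := by
    by_contra hn
    have hmem : #F' ∈ {c | ∃ F : Set (Set ℕ), CenteredIn {A : Set ℕ | A.Infinite} F ∧
        ¬ HasLowerBoundIn {A : Set ℕ | A.Infinite} F ∧ c = #F} := ⟨F', hcentered, hn, rfl⟩
    have hple : pNumber ≤ #F' := csInf_le' hmem
    exact absurd hple (not_le_of_gt hsize)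
  obtain ⟨S, hSinf, hSlb⟩ := hLB
  have hSinf : S.Infinite := hSinf
  -- build B
  set B : ℕ → Bool := fun n => decide (∃ a ∈ S, Good (e a) ∧ n ∈ (e a).2) with hB
  have hBmem : ∀ m, B ∈ V m := by
    intro m
    have hfin : (S \ Ys m).Finite := hSlb (Ys m) (Set.mem_union_right _ ⟨m, rfl⟩)
    obtain ⟨a, ha⟩ := (hSinf.diff hfin).nonempty
    have haS : a ∈ S := ha.1
    have haY : a ∈ Ys m := by
      by_contra hc
      exact ha.2 ⟨haS, hc⟩
    have hBsup : ∀ n ∈ (e a).2, B n = true := by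
      intro n hn
      exact decide_eq_true ⟨a, haS, haY.1, hn⟩
    exact hVanti haY.2 (haY.1 B hBsup)
  refine ⟨B, hVG (Set.mem_iInter.mpr hBmem), ?_⟩
  intro i
  have hfin : (S \ Xs i).Finite := hSlb (Xs i) (Set.mem_union_left _ ⟨i, rfl⟩)
  have hsub : {n | B n = true} \ {n | A i n = true} ⊆ ⋃ a ∈ (S \ Xs i), ↑(e a).2 := by
    intro n hn
    obtain ⟨a, haS, haG, hna⟩ := decide_eq_true_iff.mp hn.1
    have haX : a ∉ Xs i := by
      intro hc
      exact hn.2 (hc.2 n hna)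
    exact Set.mem_biUnion ⟨haS, haX⟩ hna
  exact Set.Finite.subset (hfin.biUnion (fun a _ => (e a).2.finite_toSet)) hsub

/-- For a `Gδ` semifilter `G`: any family of size `< 𝔭` centered in `G` has a
pseudointersection in `G` (this is the conclusion of `MA(σ-centered)` at `κ < 𝔭`),
and consequently `𝔭 ≤ 𝔭_G`.  (The hypothesis `hW` reflects the paper's standing
assumption that unbounded centered families exist in `G`.) -/
theorem gdelta_pseudointersection (G : Set (ℕ → Bool)) (hG : IsSemifilterC G)
    (hGδ : IsGδ G)
    (hW : ∃ F : Set (ℕ → Bool), CenteredInC G F ∧ ¬ HasLowerBoundInC G F) :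
    (∀ (ι : Type) (A : ι → ℕ → Bool), #ι < pNumber →
      (∀ T : Finset ι, T.Nonempty → (fun n => decide (∀ i ∈ T, A i n = true)) ∈ G) →
      ∃ B ∈ G, ∀ i : ι, AlmostSubC B (A i)) ∧
    pNumber ≤ pInvC G := by
  classical
  have main : ∀ (ι : Type) (A : ι → ℕ → Bool), #ι < pNumber →
      (∀ T : Finset ι, T.Nonempty → (fun n => decide (∀ i ∈ T, A i n = true)) ∈ G) →
      ∃ B ∈ G, ∀ i : ι, AlmostSubC B (A i) := by
    intro ι A hcard hcent
    rcases isEmpty_or_nonempty ι with hι | hι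
    · obtain ⟨B₀, hB₀⟩ := hG.1
      exact ⟨B₀, hB₀, fun i => (IsEmpty.false i).elim⟩
    rcases finite_or_infinite ι with hfin | hinf
    · haveI := Fintype.ofFinite ι
      refine ⟨_, hcent Finset.univ Finset.univ_nonempty, ?_⟩
      intro i
      refine Set.Finite.subset Set.finite_empty ?_
      intro n hn
      have h1 := hn.1
      simp only [Set.mem_setOf_eq, decide_eq_true_eq] at h1
      exact hn.2 (h1 i (Finset.mem_univ i))
    · exact main_infinite G hG hGδ ι A hcard hcent
  refine ⟨main, ?_⟩
  -- second conjunct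
  have hne : {c | ∃ F : Set (ℕ → Bool), CenteredInC G F ∧ ¬ HasLowerBoundInC G F ∧
      c = #F}.Nonempty := by
    obtain ⟨F, h1, h2⟩ := hW
    exact ⟨#F, F, h1, h2, rfl⟩
  have hmem := csInf_mem hne
  obtain ⟨F, hFcent, hFnlb, hFeq⟩ := hmem
  show pNumber ≤ pInvC G
  rw [show pInvC G = #F from hFeq]
  by_contra hlt
  push_neg at hlt
  -- apply main with ι = ↥F
  have hcent' : ∀ T : Finset ↥F, T.Nonempty →
      (fun n => decide (∀ i ∈ T, (i : ℕ → Bool) n = true)) ∈ G := by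
    intro T hT
    have hT' : (T.image Subtype.val).Nonempty := hT.image _
    have hsub : ↑(T.image Subtype.val) ⊆ F := by
      intro X hX
      obtain ⟨i, _, rfl⟩ := Finset.mem_image.mp hX
      exact i.2
    have := hFcent.2 (T.image Subtype.val) hT' hsub
    have heq : (fun n => decide (∀ X ∈ T.image Subtype.val, X n = true)) =
        (fun n => decide (∀ i ∈ T, (i : ℕ → Bool) n = true)) := by
      funext n
      apply decide_eq_decide.mpr
      constructor
      · intro h i hi
        exact h i.1 (Finset.mem_image.mpr ⟨i, hi, rfl⟩)
      · intro h X hX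
        obtain ⟨i, hi, rfl⟩ := Finset.mem_image.mp hX
        exact h i hi
    rwa [heq] at this
  have hcard' : #(↥F) < pNumber := hlt
  obtain ⟨B, hBG, hB⟩ := main ↥F (fun i => i.1) hcard' hcent'
  exact hFnlb ⟨B, hBG, fun C hC => hB ⟨C, hC⟩⟩
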